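/- Under the hypotheses of Proposition 2 (π a q-Weil number of degree 2g, conjugates π_i and q/π_i pairwise coprime, and existence of the Galois elements σ_i), the elements q, π_1, …, π_g form a free generating set of the multiplicative group Φ_π generated by all conjugates of π; in particular Φ_π is free abelian of rank g + 1. -/

import Mathlib

open IsDedekindDomain NumberField

lemma not_isUnit_natCast_pow {K : Type*} [Field K] [NumberField K]
    {p : ℕ} (hp : 1 < p) (k : ℕ) (hk : 1 ≤ k) : ¬ IsUnit ((p : RingOfIntegers K) ^ k) := by
  intro h
  obtain ⟨u, hu⟩ := h
  have h0 : ((u⁻¹ : (RingOfIntegers K)ˣ) : RingOfIntegers K) * ((p : RingOfIntegers K) ^ k) = 1 := by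
    rw [← hu]; exact u.inv_mul
  have h1 : (algebraMap (RingOfIntegers K) K ((u⁻¹ : (RingOfIntegers K)ˣ) : RingOfIntegers K)) *
      ((p : K) ^ k) = 1 := by
    have := congrArg (algebraMap (RingOfIntegers K) K) h0
    simpa using this
  set W := algebraMap (RingOfIntegers K) K ((u⁻¹ : (RingOfIntegers K)ˣ) : RingOfIntegers K) with hW
  have hWint : IsIntegral ℤ W := RingOfIntegers.isIntegral_coe _
  have hpK : ((p : K) ^ k) ≠ 0 := by
    apply pow_ne_zero
    exact_mod_cast Nat.cast_ne_zero.mpr (by omega)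
  have hWeq : W = algebraMap ℚ K (((p : ℚ) ^ k)⁻¹) := by
    have hWi : W = ((p : K) ^ k)⁻¹ := eq_inv_of_mul_eq_one_left h1
    rw [hWi, map_inv₀, map_pow]
    norm_num
  rw [hWeq, isIntegral_algebraMap_iff (algebraMap ℚ K).injective] at hWint
  obtain ⟨z, hz⟩ := IsIntegrallyClosed.isIntegral_iff.mp hWint
  have hq : (z * p ^ k : ℚ) = 1 := by
    rw [show ((z : ℚ)) = algebraMap ℤ ℚ z from rfl, hz]
    field_simp
  have hzp : z * (p : ℤ) ^ k = 1 := by exact_mod_cast hq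
  have hdvd : (p : ℤ) ^ k ∣ 1 := Dvd.intro z (by linarith [hzp])
  have hle := Int.le_of_dvd one_pos hdvd
  have : (1 : ℤ) < (p : ℤ) ^ k := by
    have h1p : (1:ℤ) < p := by exact_mod_cast hp
    calc (1:ℤ) < p := h1p
    _ ≤ p ^ k := le_self_pow₀ (by omega) (by omega)
  omega

lemma exists_heightOneSpectrum_natCast_pow_mem {K : Type*} [Field K] [NumberField K]
    {p : ℕ} (hp : 1 < p) (k : ℕ) (hk : 1 ≤ k) :
    ∃ v : HeightOneSpectrum (RingOfIntegers K), ((p : RingOfIntegers K) ^ k) ∈ v.asIdeal := by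
  have hnu := not_isUnit_natCast_pow (K := K) hp k hk
  have hne : Ideal.span {((p : RingOfIntegers K) ^ k)} ≠ ⊤ := by
    intro h; exact hnu (Ideal.span_singleton_eq_top.mp h)
  obtain ⟨M, hM, hle⟩ := Ideal.exists_le_maximal _ hne
  have hmem : ((p : RingOfIntegers K) ^ k) ∈ M := hle (Ideal.subset_span rfl)
  have hpne : ((p : RingOfIntegers K) ^ k) ≠ 0 := by
    apply pow_ne_zero
    exact_mod_cast Nat.cast_ne_zero.mpr (by omega : p ≠ 0)
  refine ⟨⟨M, hM.isPrime, ?_⟩, hmem⟩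
  intro hbot
  rw [hbot] at hmem
  exact hpne (Ideal.mem_bot.mp hmem)


lemma prod_zpow_eq_zpow_sum {M : Type*} [CommGroupWithZero M] {a : M} (ha : a ≠ 0)
    {ι : Type*} (s : Finset ι) (f : ι → ℤ) :
    ∏ i ∈ s, a ^ f i = a ^ (∑ i ∈ s, f i) := by
  classical
  induction s using Finset.induction_on with
  | empty => simp
  | insert _ _ h ih => rw [Finset.prod_insert h, Finset.sum_insert h, zpow_add₀ ha, ih]



lemma key_coprime_zpow {p k : ℕ} (hp : 1 < p) (hk : 1 ≤ k) {K : Type*} [Field K] [NumberField K]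
    (x y : RingOfIntegers K) (hxy : x * y = (p ^ k : RingOfIntegers K))
    (ι : K →+* ℂ)
    (habs : ‖ι (algebraMap (RingOfIntegers K) K x)‖ = Real.sqrt ((p:ℝ) ^ k))
    (hcop : ∀ v : HeightOneSpectrum (RingOfIntegers K), ¬(x ∈ v.asIdeal ∧ y ∈ v.asIdeal))
    {a b : ℤ} (h : (algebraMap (RingOfIntegers K) K x) ^ a
      = (algebraMap (RingOfIntegers K) K y) ^ b) : a = 0 ∧ b = 0 := by
  set X := algebraMap (RingOfIntegers K) K x with hXdef
  set Y := algebraMap (RingOfIntegers K) K y with hYdef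
  have hq0 : (0:ℝ) < (p:ℝ)^k := by positivity
  have hq1 : (1:ℝ) < (p:ℝ)^k := by
    have h1p : (1:ℝ) < (p:ℝ) := by exact_mod_cast hp
    calc (1:ℝ) < (p:ℝ) := h1p
    _ ≤ (p:ℝ)^k := le_self_pow₀ (by linarith) (by omega)
  set s := Real.sqrt ((p:ℝ)^k) with hsdef
  have hs1 : 1 < s := by
    rw [hsdef, show (1:ℝ) = Real.sqrt 1 from (Real.sqrt_one).symm]
    exact Real.sqrt_lt_sqrt (by norm_num) hq1
  have hs0 : 0 < s := lt_trans one_pos hs1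
  have hXY : X * Y = (p:K)^k := by
    have := congrArg (algebraMap (RingOfIntegers K) K) hxy
    simpa using this
  have habsXY : ‖ι X‖ * ‖ι Y‖ = (p:ℝ)^k := by
    rw [← norm_mul, ← map_mul, hXY]
    simp
  have hss : s * s = (p:ℝ)^k := Real.mul_self_sqrt (le_of_lt hq0)
  have habsY : ‖ι Y‖ = s := by
    apply mul_left_cancel₀ (ne_of_gt hs0)
    calc s * ‖ι Y‖ = ‖ι X‖ * ‖ι Y‖ := by rw [habs]
    _ = (p:ℝ)^k := habsXY
    _ = s * s := hss.symm
  have hX0 : X ≠ 0 := by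
    intro h0
    rw [h0] at habs
    simp at habs
    rw [← habs] at hs0
    exact lt_irrefl _ hs0
  have hY0 : Y ≠ 0 := by
    intro h0
    rw [h0] at habsY
    simp at habsY
    rw [habsY] at hs0
    exact lt_irrefl _ hs0
  have hab : a = b := by
    have h2 : s ^ a = s ^ b := by
      have := congrArg (fun z => ‖ι z‖) h
      simpa [map_zpow₀, habs, habsY] using this
    exact zpow_right_injective₀ hs0 (ne_of_gt hs1).symm.symm h2
  subst hab
  rcases eq_or_ne a 0 with ha | ha
  · exact ⟨ha, ha⟩
  exfalso
  have hnat : ∃ n : ℕ, 0 < n ∧ x ^ n = y ^ n := by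
    rcases lt_or_gt_of_ne ha with hneg | hpos
    · refine ⟨(-a).toNat, by omega, ?_⟩
      apply RingOfIntegers.coe_injective
      have h' : X ^ ((-a).toNat : ℤ) = Y ^ ((-a).toNat : ℤ) := by
        rw [Int.toNat_of_nonneg (by omega), zpow_neg, zpow_neg, h]
      rw [map_pow, map_pow, ← hXdef, ← hYdef, ← zpow_natCast, ← zpow_natCast]
      exact h'
    · refine ⟨a.toNat, by omega, ?_⟩
      apply RingOfIntegers.coe_injective
      have h' : X ^ (a.toNat : ℤ) = Y ^ (a.toNat : ℤ) := by
        rw [Int.toNat_of_nonneg (by omega)]; exact h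
      rw [map_pow, map_pow, ← hXdef, ← hYdef, ← zpow_natCast, ← zpow_natCast]
      exact h'
  obtain ⟨n, hn, hxyn⟩ := hnat
  obtain ⟨v, hv⟩ := exists_heightOneSpectrum_natCast_pow_mem (K := K) hp k hk
  have hv' : x * y ∈ v.asIdeal := by
    rw [hxy]
    push_cast
    exact_mod_cast hv
  rcases v.isPrime.mem_or_mem hv' with hx | hy
  · have hyv : y ∈ v.asIdeal := v.isPrime.mem_of_pow_mem n
      (by rw [← hxyn]; exact v.asIdeal.pow_mem_of_mem hx n hn)
    exact hcop v ⟨hx, hyv⟩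
  · have hxv : x ∈ v.asIdeal := v.isPrime.mem_of_pow_mem n
      (by rw [hxyn]; exact v.asIdeal.pow_mem_of_mem hy n hn)
    exact hcop v ⟨hxv, hy⟩




theorem weil_group_free_of_rank_succ
    (p k g : ℕ) (hp : p.Prime) (hk : 1 ≤ k) (hg : 1 ≤ g)
    (K : Type*) [Field K] [NumberField K]
    (π π' : Fin g → RingOfIntegers K)
    (hfac : ∀ i, π i * π' i = (p ^ k : RingOfIntegers K))
    (hweil : ∀ i, ∀ σ : K →+* ℂ,
      ‖σ (algebraMap (RingOfIntegers K) K (π i))‖ = Real.sqrt ((p : ℝ) ^ k))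
    (hcop : ∀ i, ∀ v : HeightOneSpectrum (RingOfIntegers K),
      ¬(π i ∈ v.asIdeal ∧ π' i ∈ v.asIdeal))
    (c : K ≃ₐ[ℚ] K)
    (hc : ∀ i, c (algebraMap (RingOfIntegers K) K (π i)) = algebraMap (RingOfIntegers K) K (π' i))
    (ι : K →+* ℂ) (hι : ∀ x, ι (c x) = starRingEnd ℂ (ι x))
    (hσ : ∀ i, ∃ σ : K ≃ₐ[ℚ] K,
      σ (algebraMap (RingOfIntegers K) K (π i)) = algebraMap (RingOfIntegers K) K (π i) ∧
      ∀ j, j ≠ i → σ (algebraMap (RingOfIntegers K) K (π j)) = algebraMap (RingOfIntegers K) K (π' j)) :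
    Function.Injective (fun mn : ℤ × (Fin g → ℤ) =>
      (p ^ k : K) ^ mn.1 * ∏ i, (algebraMap (RingOfIntegers K) K (π i)) ^ (mn.2 i)) ∧
    ∀ α : K,
      (∃ a b : Fin g → ℤ,
        α = (∏ i, (algebraMap (RingOfIntegers K) K (π i)) ^ (a i)) *
            ∏ i, (algebraMap (RingOfIntegers K) K (π' i)) ^ (b i)) ↔
      (∃ (m : ℤ) (n : Fin g → ℤ),
        α = (p ^ k : K) ^ m * ∏ i, (algebraMap (RingOfIntegers K) K (π i)) ^ (n i)) := by
  have hp0 : ((p : K)) ≠ 0 := Nat.cast_ne_zero.mpr hp.pos.ne'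
  have hQ0 : ((p : K) ^ k) ≠ 0 := pow_ne_zero k hp0
  set PP : Fin g → K := fun i => algebraMap (RingOfIntegers K) K (π i) with hPPdef
  set PP' : Fin g → K := fun i => algebraMap (RingOfIntegers K) K (π' i) with hPP'def
  have hfacK : ∀ i, PP i * PP' i = (p : K) ^ k := by
    intro i
    have := congrArg (algebraMap (RingOfIntegers K) K) (hfac i)
    simpa [hPPdef, hPP'def] using this
  have hPP0 : ∀ i, PP i ≠ 0 := fun i => left_ne_zero_of_mul (by rw [hfacK i]; exact hQ0)
  have hPP'0 : ∀ i, PP' i ≠ 0 := fun i => right_ne_zero_of_mul (by rw [hfacK i]; exact hQ0)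
  constructor
  · -- injectivity
    intro u v huv
    obtain ⟨m, n⟩ := u
    obtain ⟨m', n'⟩ := v
    have huv' : ((p:K)^k)^m * ∏ i, PP i ^ n i = ((p:K)^k)^m' * ∏ i, PP i ^ n' i := huv
    set M := m - m' with hM
    set N : Fin g → ℤ := fun i => n i - n' i with hNdef
    have hpr0 : (((p:K)^k)^m' * ∏ i, PP i ^ n' i) ≠ 0 := by
      apply mul_ne_zero (zpow_ne_zero _ hQ0)
      exact Finset.prod_ne_zero_iff.mpr fun i _ => zpow_ne_zero _ (hPP0 i)
    have hR : ((p:K)^k)^M * ∏ i, PP i ^ N i = 1 := by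
      have hrw : ((p:K)^k)^M * ∏ i, PP i ^ N i
          = (((p:K)^k)^m * ∏ i, PP i ^ n i) / (((p:K)^k)^m' * ∏ i, PP i ^ n' i) := by
        rw [mul_div_mul_comm, ← zpow_sub₀ hQ0, ← Finset.prod_div_distrib, hM]
        congr 1
        refine Finset.prod_congr rfl fun i _ => ?_
        rw [← zpow_sub₀ (hPP0 i)]
      rw [hrw, huv', div_self hpr0]
    have hkey : ∀ i : Fin g, N i = 0 ∧
        2*M + ∑ j ∈ Finset.univ.erase i, N j = 0 := by
      intro i
      obtain ⟨σ, hσ1, hσ2⟩ := hσ i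
      have hs1 : σ (PP i) = PP i := hσ1
      have hs2 : ∀ j, j ≠ i → σ (PP j) = PP' j := fun j hj => hσ2 j hj
      set S := ∑ j ∈ Finset.univ.erase i, N j with hSdef
      have hRi : ((p:K)^k)^M * (PP i ^ N i * ∏ j ∈ Finset.univ.erase i, PP j ^ N j) = 1 := by
        rw [← Finset.mul_prod_erase Finset.univ (fun j => PP j ^ N j) (Finset.mem_univ i)] at hR
        exact hR
      have hRσ : ((p:K)^k)^M * (PP i ^ N i * ∏ j ∈ Finset.univ.erase i, PP' j ^ N j) = 1 := by
        have hh := congrArg σ hR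
        rw [map_one, map_mul] at hh
        have e1 : σ (((p:K)^k)^M) = ((p:K)^k)^M := by
          rw [map_zpow₀, map_pow, map_natCast]
        have e2 : σ (∏ j, PP j ^ N j)
            = PP i ^ N i * ∏ j ∈ Finset.univ.erase i, PP' j ^ N j := by
          rw [map_prod,
            ← Finset.mul_prod_erase Finset.univ (fun j => σ (PP j ^ N j)) (Finset.mem_univ i)]
          congr 1
          · rw [map_zpow₀, hs1]
          · refine Finset.prod_congr rfl fun j hj => ?_
            rw [map_zpow₀, hs2 j (Finset.ne_of_mem_erase hj)]
        rw [e1, e2] at hh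
        exact hh
      have hP12 : (∏ j ∈ Finset.univ.erase i, PP j ^ N j) *
          (∏ j ∈ Finset.univ.erase i, PP' j ^ N j) = ((p:K)^k) ^ S := by
        rw [← Finset.prod_mul_distrib, hSdef, ← prod_zpow_eq_zpow_sum hQ0]
        refine Finset.prod_congr rfl fun j _ => ?_
        rw [← mul_zpow, hfacK j]
      have hcomb : ((p:K)^k)^(2*M + S) * PP i ^ (2 * N i) = 1 := by
        calc ((p:K)^k)^(2*M + S) * PP i ^ (2 * N i)
            = (((p:K)^k)^M * (PP i ^ N i * ∏ j ∈ Finset.univ.erase i, PP j ^ N j)) *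
              (((p:K)^k)^M * (PP i ^ N i * ∏ j ∈ Finset.univ.erase i, PP' j ^ N j)) := by
              rw [zpow_add₀ hQ0, two_mul M, zpow_add₀ hQ0, two_mul (N i),
                zpow_add₀ (hPP0 i), ← hP12]
              ring
          _ = 1 := by rw [hRi, hRσ, one_mul]
      have hfin : PP i ^ (2*N i + (2*M+S)) = PP' i ^ (-(2*M+S)) := by
        have h3 : PP i ^ (2*N i + (2*M+S)) * PP' i ^ (2*M+S) = 1 := by
          calc PP i ^ (2*N i + (2*M+S)) * PP' i ^ (2*M+S)
              = PP i ^ (2*N i) * ((PP i * PP' i) ^ (2*M+S)) := by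
                rw [zpow_add₀ (hPP0 i), mul_zpow]; ring
            _ = ((p:K)^k)^(2*M+S) * PP i ^ (2*N i) := by rw [hfacK i]; ring
            _ = 1 := hcomb
        have h4 : PP i ^ (2*N i + (2*M+S)) = (PP' i ^ (2*M+S))⁻¹ :=
          eq_inv_of_mul_eq_one_left h3
        rw [← zpow_neg] at h4
        exact h4
      have hz := key_coprime_zpow hp.one_lt hk (π i) (π' i) (hfac i) ι (hweil i ι) (hcop i) hfin
      exact ⟨by omega, by omega⟩
    have hN0 : ∀ i, N i = 0 := fun i => (hkey i).1
    have hM0 : M = 0 := by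
      have h2 := (hkey ⟨0, hg⟩).2
      have hsz : ∑ j ∈ Finset.univ.erase (⟨0, hg⟩ : Fin g), N j = 0 :=
        Finset.sum_eq_zero fun j _ => hN0 j
      omega
    have hm : m = m' := by omega
    have hn : n = n' := by
      funext i
      have h5 : n i - n' i = 0 := hN0 i
      omega
    exact Prod.ext hm hn

  · -- characterization of the image
    intro α
    constructor
    · rintro ⟨a, b, rfl⟩
      refine ⟨∑ i, b i, a - b, ?_⟩
      have h1 : ∀ i, PP' i ^ b i = ((p : K) ^ k) ^ b i * (PP i) ^ (-b i) := by
        intro i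
        have hii : PP' i = ((p : K) ^ k) * (PP i)⁻¹ := by
          rw [eq_mul_inv_iff_mul_eq₀ (hPP0 i), mul_comm]
          exact hfacK i
        rw [hii, mul_zpow, inv_zpow, ← zpow_neg]
      calc (∏ i, PP i ^ a i) * ∏ i, PP' i ^ b i
          = (∏ i, PP i ^ a i) * ∏ i, (((p : K) ^ k) ^ b i * (PP i) ^ (-b i)) := by
            rw [Finset.prod_congr rfl fun i _ => h1 i]
        _ = (((p : K) ^ k) ^ (∑ i, b i)) * ((∏ i, PP i ^ a i) * ∏ i, (PP i) ^ (-b i)) := by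
            rw [Finset.prod_mul_distrib, prod_zpow_eq_zpow_sum hQ0]
            ring
        _ = (((p : K) ^ k) ^ (∑ i, b i)) * ∏ i, (PP i) ^ ((a - b) i) := by
            rw [← Finset.prod_mul_distrib]
            congr 1
            refine Finset.prod_congr rfl fun i _ => ?_
            rw [← zpow_add₀ (hPP0 i)]
            simp [sub_eq_add_neg]
    · rintro ⟨m, n, rfl⟩
      have i0 : Fin g := ⟨0, hg⟩
      refine ⟨(fun i => n i + if i = i0 then m else 0), (fun i => if i = i0 then m else 0), ?_⟩
      have hb : ∀ (f : Fin g → K), (∀ i, f i ≠ 0) →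
          ∏ i, f i ^ (if i = i0 then m else 0) = f i0 ^ m := by
        intro f hf
        rw [Finset.prod_eq_single i0]
        · simp
        · intro j _ hj; simp [hj]
        · intro hj; exact absurd (Finset.mem_univ i0) hj
      calc ((p : K) ^ k) ^ m * ∏ i, PP i ^ n i
          = (∏ i, PP i ^ n i) * ((PP i0 * PP' i0) ^ m) := by rw [hfacK i0]; ring
        _ = ((∏ i, PP i ^ n i) * PP i0 ^ m) * PP' i0 ^ m := by rw [mul_zpow]; ring
        _ = (∏ i, PP i ^ (n i + if i = i0 then m else 0)) *
              ∏ i, PP' i ^ (if i = i0 then m else 0) := by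
            rw [hb PP' hPP'0]
            congr 1
            rw [← hb PP hPP0, ← Finset.prod_mul_distrib]
            exact Finset.prod_congr rfl fun i _ => (zpow_add₀ (hPP0 i) _ _).symm
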